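/- Let S ∈ ℝ^{m×m}, B ∈ ℝ^{m×p}, a > 0, κ > 0, and let P ∈ ℝ^{m×m} be a symmetric positive definite matrix satisfying the algebraic Riccati equation SᵀP + PS − 2κPBBᵀP + aI = 0. Let H ∈ ℝ^{N×N} be a matrix all of whose eigenvalues λ ∈ ℂ satisfy Re λ ≥ κ, and set K = BᵀP. Then the matrix I_N ⊗ S − H ⊗ (BK) ∈ ℝ^{Nm×Nm} is Hurwitz. -/

import Mathlib

open Matrix
open scoped Kronecker


open Matrix Polynomial
open scoped Kronecker

namespace RicAux

variable {n : Type*} [Fintype n] [DecidableEq n]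

lemma charpoly_eval (M : Matrix n n ℂ) (μ : ℂ) :
    M.charpoly.eval μ = (μ • (1 : Matrix n n ℂ) - M).det := by
  have h : M.charpoly.eval μ = (Polynomial.evalRingHom μ) M.charpoly := rfl
  rw [h, Matrix.charpoly, RingHom.map_det]
  congr 1
  ext i j
  by_cases hij : i = j <;>
    simp [hij, Matrix.charmatrix_apply_eq, Matrix.charmatrix_apply_ne, Matrix.one_apply,
      Matrix.sub_apply, Matrix.smul_apply]

lemma isRoot_charpoly_iff (M : Matrix n n ℂ) (μ : ℂ) :
    M.charpoly.IsRoot μ ↔ ∃ v, v ≠ 0 ∧ M *ᵥ v = μ • v := by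
  rw [Polynomial.IsRoot, charpoly_eval, ← Matrix.exists_mulVec_eq_zero_iff]
  constructor
  · rintro ⟨v, hv, hv2⟩
    refine ⟨v, hv, ?_⟩
    have := hv2
    rw [Matrix.sub_mulVec, Matrix.smul_mulVec, Matrix.one_mulVec, sub_eq_zero] at this
    exact this.symm
  · rintro ⟨v, hv, hv2⟩
    refine ⟨v, hv, ?_⟩
    rw [Matrix.sub_mulVec, Matrix.smul_mulVec, Matrix.one_mulVec, sub_eq_zero, hv2]

lemma charpoly_transpose (M : Matrix n n ℂ) : Mᵀ.charpoly = M.charpoly := by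
  rw [Matrix.charpoly, Matrix.charpoly, ← Matrix.det_transpose (charmatrix Mᵀ)]
  congr 1
  ext i j
  by_cases hij : i = j
  · subst hij; simp [Matrix.charmatrix_apply_eq]
  · simp [Matrix.charmatrix_apply_ne _ _ _ hij, Matrix.charmatrix_apply_ne _ _ _ (Ne.symm hij),
      Matrix.transpose_apply]

end RicAux


open Matrix Polynomial

set_option linter.unusedSectionVars false
set_option maxHeartbeats 1000000
namespace RicAux4

variable {l n o : Type*} [Fintype l] [Fintype n] [Fintype o] [DecidableEq n] [DecidableEq l]

lemma map_mul' (A : Matrix l n ℝ) (B : Matrix n o ℝ) :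
    (A * B).map Complex.ofReal = A.map Complex.ofReal * B.map Complex.ofReal := by
  ext i j; simp [Matrix.map_apply, Matrix.mul_apply]

lemma map_transpose' (A : Matrix l n ℝ) :
    (Aᵀ).map Complex.ofReal = (A.map Complex.ofReal)ᵀ := by
  ext i j; simp [Matrix.map_apply]

lemma conjTranspose_map' (A : Matrix l n ℝ) :
    (A.map Complex.ofReal)ᴴ = Aᵀ.map Complex.ofReal := by
  ext i j; simp [Matrix.conjTranspose_apply, Matrix.map_apply, Complex.conj_ofReal]

lemma map_add' (A B : Matrix l n ℝ) :
    (A + B).map Complex.ofReal = A.map Complex.ofReal + B.map Complex.ofReal := by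
  ext i j; simp [Matrix.map_apply]

lemma map_sub' (A B : Matrix l n ℝ) :
    (A - B).map Complex.ofReal = A.map Complex.ofReal - B.map Complex.ofReal := by
  ext i j; simp [Matrix.map_apply]

lemma map_smul' (r : ℝ) (A : Matrix l n ℝ) :
    (r • A).map Complex.ofReal = (r : ℂ) • A.map Complex.ofReal := by
  ext i j; simp [Matrix.map_apply]

lemma map_one' : ((1 : Matrix n n ℝ)).map Complex.ofReal = (1 : Matrix n n ℂ) := by
  ext i j; by_cases h : i = j <;> simp [h, Matrix.one_apply, Matrix.map_apply]

lemma star_dot_self_re_nonneg (w : n → ℂ) : 0 ≤ (star w ⬝ᵥ w).re := by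
  simp only [dotProduct, Pi.star_apply, Complex.star_def,
    ← Complex.normSq_eq_conj_mul_self]
  rw [← Complex.ofReal_sum]
  simp only [Complex.ofReal_re]
  exact Finset.sum_nonneg fun j _ => Complex.normSq_nonneg _

lemma star_dot_self_im (w : n → ℂ) : (star w ⬝ᵥ w).im = 0 := by
  simp only [dotProduct, Pi.star_apply, Complex.star_def,
    ← Complex.normSq_eq_conj_mul_self]
  rw [← Complex.ofReal_sum]
  simp

lemma star_dot_self_re_pos {w : n → ℂ} (hw : w ≠ 0) : 0 < (star w ⬝ᵥ w).re := by
  simp only [dotProduct, Pi.star_apply, Complex.star_def,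
    ← Complex.normSq_eq_conj_mul_self]
  rw [← Complex.ofReal_sum]
  simp only [Complex.ofReal_re]
  obtain ⟨i, hi⟩ := Function.ne_iff.mp hw
  exact Finset.sum_pos' (fun j _ => Complex.normSq_nonneg _)
    ⟨i, Finset.mem_univ i, Complex.normSq_pos.mpr hi⟩

lemma conj_mul_dot (Nc : Matrix l n ℂ) (u : n → ℂ) :
    star u ⬝ᵥ ((Ncᴴ * Nc) *ᵥ u) = star (Nc *ᵥ u) ⬝ᵥ (Nc *ᵥ u) := by
  rw [← Matrix.mulVec_mulVec, Matrix.dotProduct_mulVec, ← Matrix.star_mulVec]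

lemma posdef_complex (P : Matrix n n ℝ) (hP : P.PosDef) (u : n → ℂ) (hu : u ≠ 0) :
    0 < (star u ⬝ᵥ (P.map Complex.ofReal *ᵥ u)).re ∧
      (star u ⬝ᵥ (P.map Complex.ofReal *ᵥ u)).im = 0 := by
  set x : n → ℝ := fun i => (u i).re with hx
  set y : n → ℝ := fun i => (u i).im with hy
  have hsymm : ∀ i j, P i j = P j i := fun i j => by
    have := congrFun (congrFun hP.isHermitian j) i
    simpa [Matrix.conjTranspose_apply] using this
  have expand : star u ⬝ᵥ (P.map Complex.ofReal *ᵥ u)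
      = ∑ i, ∑ j, (starRingEnd ℂ) (u i) * (((P i j : ℝ) : ℂ) * u j) := by
    simp [dotProduct, Matrix.mulVec, Finset.mul_sum, Complex.star_def, Matrix.map_apply]
  have hre : (star u ⬝ᵥ (P.map Complex.ofReal *ᵥ u)).re
      = x ⬝ᵥ (P *ᵥ x) + y ⬝ᵥ (P *ᵥ y) := by
    rw [expand]
    simp only [Complex.re_sum, Complex.mul_re, Complex.mul_im, Complex.conj_re, Complex.conj_im,
      Complex.ofReal_re, Complex.ofReal_im, dotProduct, Matrix.mulVec, Finset.mul_sum]
    rw [← Finset.sum_add_distrib]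
    refine Finset.sum_congr rfl fun i _ => ?_
    rw [← Finset.sum_add_distrib]
    refine Finset.sum_congr rfl fun j _ => ?_
    simp only [hx, hy]
    ring
  have key : ∀ g h : n → ℝ, ∑ i, ∑ j, g i * P i j * h j = ∑ i, ∑ j, h i * P i j * g j := by
    intro g h
    rw [Finset.sum_comm]
    exact Finset.sum_congr rfl fun j _ => Finset.sum_congr rfl fun i _ => by
      rw [hsymm i j]; ring
  have him : (star u ⬝ᵥ (P.map Complex.ofReal *ᵥ u)).im = 0 := by
    rw [expand]
    simp only [Complex.im_sum, Complex.mul_re, Complex.mul_im, Complex.conj_re, Complex.conj_im,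
      Complex.ofReal_re, Complex.ofReal_im]
    have step : (∑ i, ∑ j, ((u i).re * (P i j * (u j).im + 0 * (u j).re)
          + -(u i).im * (P i j * (u j).re - 0 * (u j).im)))
        = (∑ i, ∑ j, x i * P i j * y j) - ∑ i, ∑ j, y i * P i j * x j := by
      rw [← Finset.sum_sub_distrib]
      refine Finset.sum_congr rfl fun i _ => ?_
      rw [← Finset.sum_sub_distrib]
      refine Finset.sum_congr rfl fun j _ => ?_
      simp only [hx, hy]
      ring
    rw [step, key x y, sub_self]
  refine ⟨?_, him⟩
  rw [hre]
  have hxy : x ≠ 0 ∨ y ≠ 0 := by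
    by_contra hcon
    push_neg at hcon
    apply hu
    funext i
    have h1 := congrFun hcon.1 i
    have h2 := congrFun hcon.2 i
    simp only [hx, hy, Pi.zero_apply] at h1 h2
    exact Complex.ext h1 h2
  have hsemi : ∀ z : n → ℝ, 0 ≤ z ⬝ᵥ (P *ᵥ z) := fun z => by
    have := hP.posSemidef.dotProduct_mulVec_nonneg z
    simpa using this
  have hpos : ∀ z : n → ℝ, z ≠ 0 → 0 < z ⬝ᵥ (P *ᵥ z) := fun z hz => by
    have := hP.dotProduct_mulVec_pos hz
    simpa using this
  rcases hxy with h | h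
  · have := hpos x h; have := hsemi y; linarith
  · have := hpos y h; have := hsemi x; linarith



variable {l n o : Type*} [Fintype l] [Fintype n] [Fintype o] [DecidableEq n] [DecidableEq l]

lemma lyapunov {m p : ℕ} (S : Matrix (Fin m) (Fin m) ℝ) (B : Matrix (Fin m) (Fin p) ℝ)
    (a κ : ℝ) (ha : 0 < a) (P : Matrix (Fin m) (Fin m) ℝ) (hP : P.PosDef)
    (hric : Sᵀ * P + P * S - (2 * κ) • (P * B * Bᵀ * P)
        + a • (1 : Matrix (Fin m) (Fin m) ℝ) = 0)
    (lam μ : ℂ) (hlam : κ ≤ lam.re)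
    (u : Fin m → ℂ) (hu : u ≠ 0)
    (heig : (S.map Complex.ofReal) *ᵥ u
        - lam • (((B * (Bᵀ * P)).map Complex.ofReal) *ᵥ u) = μ • u) :
    μ.re < 0 := by
  set Sc := S.map Complex.ofReal with hSc
  set Bc := B.map Complex.ofReal with hBc
  set Pc := P.map Complex.ofReal with hPc
  have hsym : Pᵀ = P := by
    ext i j
    have := congrFun (congrFun hP.isHermitian i) j
    simpa [Matrix.conjTranspose_apply] using this
  have hPcH : Pcᴴ = Pc := by
    rw [hPc, conjTranspose_map', hsym]
  have hBKmap : (B * (Bᵀ * P)).map Complex.ofReal = Bc * Bcᵀ * Pc := by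
    rw [map_mul', map_mul', map_transpose', ← hBc, ← hPc, ← Matrix.mul_assoc]
  set Mbig := Bc * Bcᵀ * Pc with hMbig
  set Gm := Pc * Bc * Bcᵀ * Pc with hGm
  -- complexified Riccati
  have ricc : Scᴴ * Pc + Pc * Sc = ((2 * κ : ℝ) : ℂ) • Gm - (a : ℂ) • 1 := by
    have h0 := congrArg (fun M : Matrix (Fin m) (Fin m) ℝ => M.map Complex.ofReal) hric
    simp only [map_add', map_sub', map_smul', map_mul', map_transpose', map_one'] at h0
    have h0' : Scᴴ * Pc + Pc * Sc - ((2 * κ : ℝ) : ℂ) • Gm + (a : ℂ) • 1 = 0 := by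
      rw [conjTranspose_map', map_transpose']
      simpa [hSc, hBc, hPc, hGm, Matrix.map_zero] using h0
    have h2 : Scᴴ * Pc + Pc * Sc - (((2 * κ : ℝ) : ℂ) • Gm - (a : ℂ) • 1)
        = Scᴴ * Pc + Pc * Sc - ((2 * κ : ℝ) : ℂ) • Gm + (a : ℂ) • 1 := by abel
    rw [← sub_eq_zero, h2, h0']
  set A₂ := Sc - lam • Mbig with hA₂
  have hA2u : A₂ *ᵥ u = μ • u := by
    rw [hA₂, Matrix.sub_mulVec, Matrix.smul_mulVec, ← heig, hBKmap, hMbig]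
  have hMbigH : Mbigᴴ = Pc * (Bc * Bcᵀ) := by
    rw [hMbig, Matrix.conjTranspose_mul, Matrix.conjTranspose_mul, hPcH]
    have h1 : Bcᴴ = Bcᵀ := by rw [hBc, conjTranspose_map', map_transpose']
    have h2 : (Bcᵀ)ᴴ = Bc := by
      rw [hBc, ← map_transpose', conjTranspose_map', Matrix.transpose_transpose]
    rw [h1, h2]
  have hkey : A₂ᴴ * Pc + Pc * A₂
      = (((2 * κ - 2 * lam.re : ℝ)) : ℂ) • Gm - (a : ℂ) • 1 := by
    rw [hA₂, Matrix.conjTranspose_sub, Matrix.conjTranspose_smul, Matrix.sub_mul,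
      Matrix.mul_sub, Matrix.smul_mul, Matrix.mul_smul, hMbigH]
    have e1 : Pc * (Bc * Bcᵀ) * Pc = Gm := by rw [hGm]; simp only [Matrix.mul_assoc]
    have e2 : Pc * Mbig = Gm := by rw [hMbig, hGm]; simp only [Matrix.mul_assoc]
    rw [e1, e2]
    have e3 : Scᴴ * Pc - star lam • Gm + (Pc * Sc - lam • Gm)
        = (Scᴴ * Pc + Pc * Sc) - (star lam + lam) • Gm := by
      rw [add_smul]; abel
    rw [e3, ricc]
    have e4 : (star lam + lam : ℂ) = ((2 * lam.re : ℝ) : ℂ) := by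
      rw [Complex.star_def, add_comm, Complex.add_conj]
    rw [e4]
    have e5 : (((2 * κ - 2 * lam.re : ℝ)) : ℂ)
        = ((2 * κ : ℝ) : ℂ) - ((2 * lam.re : ℝ) : ℂ) := by push_cast; ring
    rw [e5, sub_smul]
    abel
  set c := star u ⬝ᵥ (Pc *ᵥ u) with hc
  set q := star u ⬝ᵥ (Gm *ᵥ u) with hq
  set nn := star u ⬝ᵥ u with hnn
  have path1 : star u ⬝ᵥ ((A₂ᴴ * Pc + Pc * A₂) *ᵥ u)
      = (starRingEnd ℂ) μ * c + μ * c := by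
    rw [Matrix.add_mulVec, dotProduct_add]
    congr 1
    · rw [← Matrix.mulVec_mulVec, Matrix.dotProduct_mulVec, ← Matrix.star_mulVec, hA2u,
        star_smul, smul_dotProduct, smul_eq_mul]
      rfl
    · rw [← Matrix.mulVec_mulVec, hA2u, Matrix.mulVec_smul, dotProduct_smul,
        smul_eq_mul]
  have path2 : star u ⬝ᵥ ((A₂ᴴ * Pc + Pc * A₂) *ᵥ u)
      = (((2 * κ - 2 * lam.re : ℝ)) : ℂ) * q - (a : ℂ) * nn := by
    rw [hkey, Matrix.sub_mulVec, dotProduct_sub, Matrix.smul_mulVec,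
      Matrix.smul_mulVec, Matrix.one_mulVec, dotProduct_smul,
      dotProduct_smul, smul_eq_mul, smul_eq_mul]
  have E := path1.symm.trans path2
  -- realness facts
  have hcpos := posdef_complex P hP u hu
  rw [← hPc, ← hc] at hcpos
  have hGm' : Gm = (Bcᵀ * Pc)ᴴ * (Bcᵀ * Pc) := by
    rw [Matrix.conjTranspose_mul, hPcH]
    have h2 : (Bcᵀ)ᴴ = Bc := by
      rw [hBc, ← map_transpose', conjTranspose_map', Matrix.transpose_transpose]
    rw [h2, hGm]
    simp only [Matrix.mul_assoc]
  have hqfacts : 0 ≤ q.re ∧ q.im = 0 := by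
    rw [hq, hGm', conj_mul_dot]
    exact ⟨star_dot_self_re_nonneg _, star_dot_self_im _⟩
  have hnre : 0 < nn.re := star_dot_self_re_pos hu
  have hnim : nn.im = 0 := star_dot_self_im u
  have Ere := congrArg Complex.re E
  simp only [Complex.add_re, Complex.mul_re, Complex.sub_re, Complex.conj_re, Complex.conj_im,
    Complex.ofReal_re, Complex.ofReal_im, hcpos.2, hqfacts.2, hnim, mul_zero, sub_zero,
    zero_mul, neg_zero, neg_mul, zero_sub, add_zero] at Ere
  have hcoef : (2 * κ - 2 * lam.re) * q.re ≤ 0 :=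
    mul_nonpos_of_nonpos_of_nonneg (by linarith) hqfacts.1
  have hne : 2 * (μ.re * c.re) < 0 := by nlinarith [mul_pos ha hnre]
  by_contra hcon
  push_neg at hcon
  nlinarith [mul_nonneg hcon (le_of_lt hcpos.1)]

end RicAux4


open Matrix
open scoped Kronecker


/-- A real square matrix is Hurwitz if every eigenvalue of its complexification has negative
real part. -/
def IsHurwitzR {n : Type*} [Fintype n] [DecidableEq n] (M : Matrix n n ℝ) : Prop :=
  ∀ μ : ℂ, (M.map Complex.ofReal).charpoly.IsRoot μ → μ.re < 0

/-- simultaneous stabilization via the algebraic Riccati equation: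
`I_N ⊗ S − H ⊗ (BK)` is Hurwitz. -/
theorem riccati_simultaneous_stabilization
    (m p N : ℕ)
    (S : Matrix (Fin m) (Fin m) ℝ) (B : Matrix (Fin m) (Fin p) ℝ)
    (a κ : ℝ) (ha : 0 < a) (hκ : 0 < κ)
    (P : Matrix (Fin m) (Fin m) ℝ) (hP : P.PosDef)
    (hriccati : Sᵀ * P + P * S - (2 * κ) • (P * B * Bᵀ * P)
        + a • (1 : Matrix (Fin m) (Fin m) ℝ) = 0)
    (H : Matrix (Fin N) (Fin N) ℝ)
    (hH : ∀ lam : ℂ, (H.map Complex.ofReal).charpoly.IsRoot lam → κ ≤ lam.re)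
    (K : Matrix (Fin p) (Fin m) ℝ) (hK : K = Bᵀ * P) :
    IsHurwitzR ((1 : Matrix (Fin N) (Fin N) ℝ) ⊗ₖ S - H ⊗ₖ (B * K)) := by
  classical
  intro μ hroot
  set Sc := S.map Complex.ofReal with hSc
  set Hc := H.map Complex.ofReal with hHc
  set BKc := (B * K).map Complex.ofReal with hBKc
  -- complexification of the big matrix
  have hFc : (((1 : Matrix (Fin N) (Fin N) ℝ) ⊗ₖ S - H ⊗ₖ (B * K)).map Complex.ofReal)
      = (1 : Matrix (Fin N) (Fin N) ℂ) ⊗ₖ Sc - Hc ⊗ₖ BKc := by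
    ext ⟨i, k⟩ ⟨j, l⟩
    by_cases hij : i = j <;>
      simp [hij, hSc, hHc, hBKc, Matrix.map_apply, Matrix.sub_apply, Matrix.kroneckerMap_apply,
        Matrix.one_apply, Complex.ofReal_sub, Complex.ofReal_mul]
  rw [hFc, RicAux.isRoot_charpoly_iff] at hroot
  obtain ⟨v, hv, hveq⟩ := hroot
  -- unvectorize
  set V : Matrix (Fin m) (Fin N) ℂ := Matrix.of (fun k i => v (i, k)) with hV
  have E : Sc * V - BKc * V * Hcᵀ = μ • V := by
    ext k i
    have key1 : ∑ x : Fin N × Fin m,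
        ((1 : Matrix (Fin N) (Fin N) ℂ) i x.1 * Sc k x.2) * v x
        = ∑ l, Sc k l * v (i, l) := by
      rw [Fintype.sum_prod_type, Finset.sum_comm]
      refine Finset.sum_congr rfl fun l _ => ?_
      simp [Matrix.one_apply, ite_mul, zero_mul, one_mul]
    have key2 : ∑ x : Fin N × Fin m, (Hc i x.1 * BKc k x.2) * v x
        = ∑ l, BKc k l * (∑ j, v (j, l) * Hc i j) := by
      rw [Fintype.sum_prod_type, Finset.sum_comm]
      refine Finset.sum_congr rfl fun l _ => ?_
      rw [Finset.mul_sum]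
      exact Finset.sum_congr rfl fun j _ => by ring
    have hcomp := congrFun hveq (i, k)
    simp only [Matrix.mulVec, dotProduct, Matrix.sub_apply, Matrix.kroneckerMap_apply,
      sub_mul, Finset.sum_sub_distrib, Pi.smul_apply, smul_eq_mul] at hcomp
    rw [key1, key2] at hcomp
    have hinner : ∀ l, (V * Hcᵀ) l i = ∑ j, v (j, l) * Hc i j := fun l => by
      rw [Matrix.mul_apply]
      exact Finset.sum_congr rfl fun j _ => by rw [Matrix.transpose_apply]; rfl
    rw [Matrix.sub_apply, Matrix.smul_apply, Matrix.mul_assoc, Matrix.mul_apply,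
      Matrix.mul_apply, smul_eq_mul]
    simp only [hinner, hV, Matrix.of_apply]
    exact hcomp
  -- nonzero column
  have hV0 : ∃ w : Fin N → ℂ, V *ᵥ w ≠ 0 := by
    obtain ⟨⟨i0, k0⟩, hvik⟩ := Function.ne_iff.mp hv
    refine ⟨Pi.single i0 1, fun hcon => hvik ?_⟩
    have hcol := congrFun hcon k0
    simp only [Matrix.mulVec, dotProduct, Pi.single_apply, mul_ite, mul_one, mul_zero,
      Finset.sum_ite_eq', Finset.mem_univ, if_true, Pi.zero_apply, hV, Matrix.of_apply] at hcol
    simpa using hcol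
  -- generalized eigenvector with nonzero image
  set f : Module.End ℂ (Fin N → ℂ) := Matrix.toLinAlgEquiv' Hcᵀ with hf
  have hsup := Module.End.iSup_maxGenEigenspace_eq_top f
  have hexist : ∃ lam : ℂ, ∃ x, x ∈ f.maxGenEigenspace lam ∧ V *ᵥ x ≠ 0 := by
    by_contra hcon
    push_neg at hcon
    have hle : ∀ lam : ℂ, f.maxGenEigenspace lam ≤ LinearMap.ker (Matrix.mulVecLin V) :=
      fun lam x hx => LinearMap.mem_ker.mpr (hcon lam x hx)
    have htople : (⊤ : Submodule ℂ (Fin N → ℂ)) ≤ LinearMap.ker (Matrix.mulVecLin V) := by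
      rw [← hsup]; exact iSup_le hle
    obtain ⟨w, hw⟩ := hV0
    exact hw (by simpa using LinearMap.mem_ker.mp (htople Submodule.mem_top))
  obtain ⟨lam, x, hxmem, hVx⟩ := hexist
  rw [Module.End.mem_maxGenEigenspace] at hxmem
  obtain ⟨kk, hkk⟩ := hxmem
  set D := Hcᵀ - lam • (1 : Matrix (Fin N) (Fin N) ℂ) with hD
  have hpowD : ∀ j : ℕ, ((f - lam • 1) ^ j) x = (D ^ j) *ᵥ x := by
    intro j
    have h1 : Matrix.toLinAlgEquiv' D = f - lam • (1 : Module.End ℂ (Fin N → ℂ)) := by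
      rw [hD, map_sub, _root_.map_smul, _root_.map_one, hf]
    rw [← h1, ← map_pow]
    exact Matrix.toLinAlgEquiv'_apply _ _
  have hDkk : (D ^ kk) *ᵥ x = 0 := by rw [← hpowD]; exact hkk
  have hx0 : x ≠ 0 := fun h0 => hVx (by rw [h0, Matrix.mulVec_zero])
  -- lam is a root of the characteristic polynomial of H
  have hlamre : κ ≤ lam.re := by
    set Q : ℕ → Prop := fun i => (D ^ i) *ᵥ x ≠ 0 with hQ
    have hQ0 : Q 0 := by simpa [hQ, Matrix.one_mulVec] using hx0
    have hQk : ¬ Q kk := by simp [hQ, hDkk]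
    set j := Nat.findGreatest Q kk with hj
    have hQj : Q j := Nat.findGreatest_spec (Nat.zero_le kk) hQ0
    have hjk : j ≤ kk := Nat.findGreatest_le kk
    have hjlt : j < kk := hjk.lt_of_ne (fun h => hQk (h ▸ hQj))
    have hQj1 : ¬ Q (j + 1) := Nat.findGreatest_is_greatest (Nat.lt_succ_self j) hjlt
    set u' := (D ^ j) *ᵥ x with hu'
    have hu'0 : u' ≠ 0 := hQj
    have hDu' : D *ᵥ u' = 0 := by
      have h2 := not_not.mp hQj1
      rw [pow_succ', ← Matrix.mulVec_mulVec] at h2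
      exact h2
    have heigH : Hcᵀ *ᵥ u' = lam • u' := by
      have h1 : (Hcᵀ - lam • 1) *ᵥ u' = 0 := hDu'
      rw [Matrix.sub_mulVec, Matrix.smul_mulVec, Matrix.one_mulVec, sub_eq_zero] at h1
      exact h1
    have hroot' : (Hcᵀ).charpoly.IsRoot lam :=
      (RicAux.isRoot_charpoly_iff _ _).mpr ⟨u', hu'0, heigH⟩
    rw [RicAux.charpoly_transpose] at hroot'
    exact hH lam hroot'
  -- the V-chain
  obtain ⟨w, hVw, hVDw⟩ : ∃ w, V *ᵥ w ≠ 0 ∧ V *ᵥ (D *ᵥ w) = 0 := by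
    set Q : ℕ → Prop := fun i => V *ᵥ ((D ^ i) *ᵥ x) ≠ 0 with hQ
    have hQ0 : Q 0 := by simpa [hQ, Matrix.one_mulVec] using hVx
    have hQk : ¬ Q kk := not_not.mpr (by rw [hDkk, Matrix.mulVec_zero])
    set j := Nat.findGreatest Q kk with hj
    have hQj : Q j := Nat.findGreatest_spec (Nat.zero_le kk) hQ0
    have hjk : j ≤ kk := Nat.findGreatest_le kk
    have hjlt : j < kk := hjk.lt_of_ne (fun h => hQk (h ▸ hQj))
    have hQj1 : ¬ Q (j + 1) := Nat.findGreatest_is_greatest (Nat.lt_succ_self j) hjlt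
    refine ⟨(D ^ j) *ᵥ x, hQj, ?_⟩
    have h2 := not_not.mp hQj1
    rw [pow_succ', ← Matrix.mulVec_mulVec] at h2
    exact h2
  have hVHw : V *ᵥ (Hcᵀ *ᵥ w) = lam • (V *ᵥ w) := by
    have h1 : V *ᵥ ((Hcᵀ - lam • 1) *ᵥ w) = 0 := hVDw
    rw [Matrix.sub_mulVec, Matrix.smul_mulVec, Matrix.one_mulVec, Matrix.mulVec_sub,
      Matrix.mulVec_smul, sub_eq_zero] at h1
    exact h1
  -- eigen-equation for u = V *ᵥ w
  set u := V *ᵥ w with hu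
  have hEw := congrArg (fun M : Matrix (Fin m) (Fin N) ℂ => M *ᵥ w) E
  rw [Matrix.sub_mulVec, Matrix.smul_mulVec, ← Matrix.mulVec_mulVec,
    Matrix.mul_assoc, ← Matrix.mulVec_mulVec, ← Matrix.mulVec_mulVec, hVHw,
    Matrix.mulVec_smul] at hEw
  have heig' : Sc *ᵥ u - lam • (((B * (Bᵀ * P)).map Complex.ofReal) *ᵥ u) = μ • u := by
    rw [← hK]
    exact hEw
  exact RicAux4.lyapunov S B a κ ha P hP hriccati lam μ hlamre u hVw heig'
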